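/- Given W ≥ 0 and ε > 0, there exists δ > 0 with the following property. Suppose γ^j = Ψ(σ^j) where Ψ satisfies properties (3) and (4) (as for the Birkhoff shortening map), each slice satisfies Length²(σ^j(·,t)) = 2π·Energy(σ^j(·,t)) < 2π(W + 1/j), and Ψ is length-nonincreasing. If j > 1/δ and Length²(γ^j(·,t₀)) > 2π(W − δ) for some t₀, then dist(γ^j(·,t₀), G) < ε. -/
import Mathlib


open Real

set_option maxHeartbeats 1600000 in
/-- Min-max theorem: almost maximal slices of the tightened sweepouts are close to
closed geodesics.  Here `Λ` is the space of piecewise geodesic closed curves with the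
`W^{1,2}` distance, `G ⊂ Λ` the closed geodesics, `Ψ` the curve-shortening map with
properties (3) and (4), and `σ j` a sequence of sweepouts (slices parametrized by
`t ∈ [−1,1]`) with maximal slice energy below `W + 1/j`; `γ j = Ψ ∘ σ j` are the
tightened sweepouts.  Given `W ≥ 0` and `ε > 0`, there is `δ > 0` so that if
`j > 1/δ` and `Length²(γ j (t₀)) > 2π(W − δ)`, then `dist(γ j (t₀), G) < ε`. -/
theorem minmax_almost_maximal_implies_almost_critical
    {Λ : Type*} [MetricSpace Λ] (G : Set Λ) (hG : G.Nonempty)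
    (Length : Λ → ℝ) (hLen : ∀ γ, 0 ≤ Length γ)
    (Ψ : Λ → Λ)
    -- `Ψ` does not increase length
    (hmono : ∀ γ, Length (Ψ γ) ≤ Length γ)
    -- property (3) of `Ψ`
    (φ : ℝ → ℝ) (hφcont : Continuous φ) (hφ0 : φ 0 = 0)
    (h3 : ∀ γ, dist γ (Ψ γ) ^ 2
      ≤ φ ((Length γ ^ 2 - Length (Ψ γ) ^ 2) / Length (Ψ γ) ^ 2))
    -- property (4) of `Ψ`
    (h4 : ∀ ε' > (0 : ℝ), ∃ δ' > (0 : ℝ), ∀ γ,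
      Metric.infDist γ G ≥ ε' → Length (Ψ γ) ≤ Length γ - δ')
    (W : ℝ) (hW : 0 ≤ W) (ε : ℝ) (hε : 0 < ε) :
    ∃ δ > (0 : ℝ), ∀ (σ : ℕ → ℝ → Λ),
      -- the sweepouts `σ j` have maximal slice energy below `W + 1/j`
      (∀ j : ℕ, 0 < j → ∀ t ∈ Set.Icc (-1 : ℝ) 1,
        Length (σ j t) ^ 2 < 2 * π * (W + 1 / j)) →
      ∀ j : ℕ, (1 / δ : ℝ) < j → ∀ t₀ ∈ Set.Icc (-1 : ℝ) 1,
        2 * π * (W - δ) < Length (Ψ (σ j t₀)) ^ 2 →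
        Metric.infDist (Ψ (σ j t₀)) G < ε := by
  have hπ : (0 : ℝ) < π := Real.pi_pos
  -- property (4) applied with `ε/2`
  obtain ⟨δ', hδ', h4'⟩ := h4 (ε / 2) (by positivity)
  -- continuity of `φ` at `0`
  obtain ⟨η, hη, hφη⟩ :=
    Metric.continuousAt_iff.1 (hφcont.continuousAt (x := (0:ℝ))) (ε ^ 2 / 4) (by positivity)
  rcases eq_or_lt_of_le hW with hW0 | hWpos
  · -- degenerate case `W = 0`
    refine ⟨δ' ^ 2 / (2 * π + 1), by positivity, ?_⟩
    intro σ hσ j hj t₀ ht₀ hlow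
    set δ : ℝ := δ' ^ 2 / (2 * π + 1) with hδdef
    have hδpos : 0 < δ := by positivity
    have hj0R : (0 : ℝ) < j := lt_trans (by positivity) hj
    have hj0 : 0 < j := by exact_mod_cast hj0R
    have hjδ : (1 : ℝ) / j < δ := by
      rw [div_lt_iff₀ hj0R]
      rw [div_lt_iff₀ hδpos] at hj
      linarith [mul_comm δ (j : ℝ)]
    by_contra hcon
    push_neg at hcon
    have hfar : Metric.infDist (Ψ (σ j t₀)) G ≥ ε / 2 := by linarith
    have hstep := h4' (Ψ (σ j t₀)) hfar
    have hB : δ' ≤ Length (Ψ (σ j t₀)) := by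
      have := hLen (Ψ (Ψ (σ j t₀))); linarith
    have hBL : Length (Ψ (σ j t₀)) ≤ Length (σ j t₀) := hmono _
    have hL2 : Length (σ j t₀) ^ 2 < 2 * π * (W + 1 / j) := hσ j hj0 t₀ ht₀
    have hB2 : δ' ^ 2 ≤ Length (σ j t₀) ^ 2 := by nlinarith [hLen (σ j t₀)]
    rw [← hW0] at hL2
    have hδval : δ * (2 * π + 1) = δ' ^ 2 := by rw [hδdef]; field_simp
    have hstep2 : 2 * π * (1 / (j:ℝ)) < 2 * π * δ :=
      mul_lt_mul_of_pos_left hjδ (by positivity)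
    nlinarith [hδpos, hπ]
  · -- main case `W > 0`
    refine ⟨min (δ' ^ 2 / (4 * π + 1)) (min (W / 2) (η * W / 5)), ?_, ?_⟩
    · have h1 : (0:ℝ) < δ' ^ 2 / (4 * π + 1) := by positivity
      have h2 : (0:ℝ) < W / 2 := by positivity
      have h3 : (0:ℝ) < η * W / 5 := by positivity
      exact lt_min h1 (lt_min h2 h3)
    intro σ hσ j hj t₀ ht₀ hlow
    set δ : ℝ := min (δ' ^ 2 / (4 * π + 1)) (min (W / 2) (η * W / 5)) with hδdef
    have hδpos : 0 < δ := by
      have h1 : (0:ℝ) < δ' ^ 2 / (4 * π + 1) := by positivity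
      have h2 : (0:ℝ) < W / 2 := by positivity
      have h3 : (0:ℝ) < η * W / 5 := by positivity
      exact lt_min h1 (lt_min h2 h3)
    have hδ1 : δ ≤ δ' ^ 2 / (4 * π + 1) := min_le_left _ _
    have hδ2 : δ ≤ W / 2 := le_trans (min_le_right _ _) (min_le_left _ _)
    have hδ3 : δ ≤ η * W / 5 := le_trans (min_le_right _ _) (min_le_right _ _)
    clear_value δ
    clear hδdef
    have hj0R : (0 : ℝ) < j := lt_trans (by positivity) hj
    have hj0 : 0 < j := by exact_mod_cast hj0R
    have hjδ : (1 : ℝ) / j < δ := by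
      rw [div_lt_iff₀ hj0R]
      rw [div_lt_iff₀ hδpos] at hj
      linarith [mul_comm δ (j : ℝ)]
    by_contra hcon
    push_neg at hcon
    set γ := σ j t₀ with hγ
    clear_value γ
    have hL2 : Length γ ^ 2 < 2 * π * (W + δ) := by
      have h1 := hσ j hj0 t₀ ht₀
      rw [← hγ] at h1
      nlinarith [mul_lt_mul_of_pos_left hjδ (by positivity : (0:ℝ) < 2 * π)]
    have hB2 : 2 * π * (W - δ) < Length (Ψ γ) ^ 2 := hlow
    have hBL : Length (Ψ γ) ≤ Length γ := hmono _
    have hB0 : 0 ≤ Length (Ψ γ) := hLen _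
    have hL0 : 0 ≤ Length γ := hLen _
    have hBpos2 : π * W < Length (Ψ γ) ^ 2 := by nlinarith
    by_cases hA : ε / 2 ≤ Metric.infDist γ G
    · -- the slice itself is far from `G`: property (4) forces a length drop
      have hstep := h4' γ hA
      have hsum : Length (Ψ γ) ^ 2 + δ' ^ 2 ≤ Length γ ^ 2 := by
        nlinarith [mul_self_le_mul_self hB0 hstep,
          mul_nonneg hδ'.le (by linarith : (0:ℝ) ≤ Length γ - δ' - Length (Ψ γ))]
      have h4πδ : δ' ^ 2 < 4 * π * δ := by nlinarith [hsum, hB2, hL2]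
      have hmul : 4 * π * δ * (4 * π + 1) ≤ 4 * π * δ' ^ 2 := by
        have h1 : 4 * π * δ ≤ 4 * π * (δ' ^ 2 / (4 * π + 1)) :=
          mul_le_mul_of_nonneg_left hδ1 (by positivity)
        have h2 : 4 * π * (δ' ^ 2 / (4 * π + 1)) * (4 * π + 1) = 4 * π * δ' ^ 2 := by
          field_simp
        nlinarith
      nlinarith [mul_lt_mul_of_pos_left h4πδ (by positivity : (0:ℝ) < 4 * π),
        mul_pos hπ hδpos]
    · -- the slice is close to `G` but its image is far: property (3) fails
      push_neg at hA
      have hdist : ε / 2 ≤ dist γ (Ψ γ) := by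
        have htri : Metric.infDist (Ψ γ) G ≤ Metric.infDist γ G + dist γ (Ψ γ) := by
          rw [dist_comm]
          exact Metric.infDist_le_infDist_add_dist
        linarith
      -- the ratio appearing in (3) is small
      set r : ℝ := (Length γ ^ 2 - Length (Ψ γ) ^ 2) / Length (Ψ γ) ^ 2 with hr
      have hr0 : 0 ≤ r := by
        apply div_nonneg _ (sq_nonneg _)
        nlinarith
      have hrη : r < η := by
        rw [hr, div_lt_iff₀ (by nlinarith : (0:ℝ) < Length (Ψ γ) ^ 2)]
        nlinarith
      have hφr : φ r < ε ^ 2 / 4 := by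
        have : dist (φ r) (φ 0) < ε ^ 2 / 4 := hφη (by
          simp only [Real.dist_eq, sub_zero]
          rw [abs_of_nonneg hr0]; exact hrη)
        rw [hφ0, Real.dist_eq, sub_zero] at this
        calc φ r ≤ |φ r| := le_abs_self _
          _ < ε ^ 2 / 4 := this
      have h3' := h3 γ
      have hd2 : (ε / 2) ^ 2 ≤ dist γ (Ψ γ) ^ 2 :=
        pow_le_pow_left₀ (by positivity) hdist 2
      nlinarith
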